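/- arXiv:1810.06311 — 2 statements merged into one kernel-verified Lean document; each statement's English description precedes it below -/
import Mathlib

section
/- The pair v(x,t) = (λ²/8)(1 - 4 sech²(λ(x + λ²t/2)/2)), w(x,t) = λ sech(λ(x + λ²t/2)/2) is an exact solution of the classical coupled Jaulent–Miodek system: v_t + v_{xxx} + (3/2) w w_{xxx} + (9/2) w_x w_{xx} - 6 v v_x - 6 v w w_x - (3/2) v_x w² = 0 and w_t + w_{xxx} - 6 v_x w - 6 v w_x - (15/2) w_x w² = 0. -/
noncomputable def sech (z : ℝ) : ℝ := 1 / Real.cosh z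

section helpers

variable (a b : ℝ)

private lemma hlin (y : ℝ) : HasDerivAt (fun y : ℝ => a * y + b) a y := by
  simpa using ((hasDerivAt_id y).const_mul a).add_const b

private lemma hcosh (y : ℝ) :
    HasDerivAt (fun y : ℝ => Real.cosh (a * y + b)) (a * Real.sinh (a * y + b)) y := by
  simpa [mul_comm, Function.comp_def] using (Real.hasDerivAt_cosh (a * y + b)).comp y (hlin a b y)

private lemma hsinh (y : ℝ) :
    HasDerivAt (fun y : ℝ => Real.sinh (a * y + b)) (a * Real.cosh (a * y + b)) y := by
  simpa [mul_comm, Function.comp_def] using (Real.hasDerivAt_sinh (a * y + b)).comp y (hlin a b y)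

private lemma coshne (y : ℝ) : Real.cosh (a * y + b) ≠ 0 :=
  ne_of_gt (Real.cosh_pos _)

-- first derivative of sech (a y + b)
private lemma hs1 (y : ℝ) :
    HasDerivAt (fun y : ℝ => sech (a * y + b))
      (-(a * Real.sinh (a * y + b)) / Real.cosh (a * y + b) ^ 2) y := by
  have h := (hcosh a b y).inv (coshne a b y)
  simpa only [sech, one_div, Pi.inv_def] using h

-- second derivative of sech (a y + b)
private lemma hs2 (y : ℝ) :
    HasDerivAt (fun y : ℝ => -(a * Real.sinh (a * y + b)) / Real.cosh (a * y + b) ^ 2)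
      (a ^ 2 * (1 / Real.cosh (a * y + b) - 2 / Real.cosh (a * y + b) ^ 3)) y := by
  have hnum : HasDerivAt (fun y : ℝ => -(a * Real.sinh (a * y + b)))
      (-(a * (a * Real.cosh (a * y + b)))) y := ((hsinh a b y).const_mul a).neg
  have hden : HasDerivAt (fun y : ℝ => Real.cosh (a * y + b) ^ 2)
      (2 * Real.cosh (a * y + b) * (a * Real.sinh (a * y + b))) y := by
    simpa [Pi.pow_def] using (hcosh a b y).pow 2
  have h := hnum.div hden (pow_ne_zero 2 (coshne a b y))
  refine h.congr_deriv ?_; symm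
  have hsq : Real.sinh (a * y + b) ^ 2 = Real.cosh (a * y + b) ^ 2 - 1 := by
    have := Real.cosh_sq_sub_sinh_sq (a * y + b); linarith
  have hc := coshne a b y
  field_simp
  linear_combination (-(2 * a ^ 2)) * hsq

-- third derivative of sech (a y + b)
private lemma hs3 (y : ℝ) :
    HasDerivAt (fun y : ℝ => a ^ 2 * (1 / Real.cosh (a * y + b) - 2 / Real.cosh (a * y + b) ^ 3))
      (a ^ 3 * Real.sinh (a * y + b) * (6 / Real.cosh (a * y + b) ^ 4 - 1 / Real.cosh (a * y + b) ^ 2)) y := by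
  have h1 : HasDerivAt (fun y : ℝ => (Real.cosh (a * y + b))⁻¹)
      (-(a * Real.sinh (a * y + b)) / Real.cosh (a * y + b) ^ 2) y := by
    exact (hcosh a b y).inv (coshne a b y)
  have h3 : HasDerivAt (fun y : ℝ => (Real.cosh (a * y + b) ^ 3)⁻¹)
      (-(3 * Real.cosh (a * y + b) ^ 2 * (a * Real.sinh (a * y + b))) / (Real.cosh (a * y + b) ^ 3) ^ 2) y := by
    have hden : HasDerivAt (fun y : ℝ => Real.cosh (a * y + b) ^ 3)
        (3 * Real.cosh (a * y + b) ^ 2 * (a * Real.sinh (a * y + b))) y := by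
      simpa [Pi.pow_def] using (hcosh a b y).pow 3
    exact hden.inv (pow_ne_zero 3 (coshne a b y))
  have h := ((h1.sub (h3.const_mul 2)).const_mul (a ^ 2))
  have heq : (fun y : ℝ => a ^ 2 * (1 / Real.cosh (a * y + b) - 2 / Real.cosh (a * y + b) ^ 3))
      = fun y : ℝ => a ^ 2 * ((Real.cosh (a * y + b))⁻¹ - 2 * (Real.cosh (a * y + b) ^ 3)⁻¹) := by
    funext y; field_simp
  rw [heq]
  refine h.congr_deriv ?_; symm
  have hc := coshne a b y
  field_simp
  ring

-- first derivative of v-shape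
private lemma hv1 (lam : ℝ) (y : ℝ) :
    HasDerivAt (fun y : ℝ => lam ^ 2 / 8 * (1 - 4 * sech (a * y + b) ^ 2))
      (lam ^ 2 * a * Real.sinh (a * y + b) / Real.cosh (a * y + b) ^ 3) y := by
  have hsq : HasDerivAt (fun y : ℝ => sech (a * y + b) ^ 2)
      (2 * sech (a * y + b) * (-(a * Real.sinh (a * y + b)) / Real.cosh (a * y + b) ^ 2)) y := by
    simpa [Pi.pow_def] using (hs1 a b y).pow 2
  have h := (((hsq.const_mul 4).const_sub 1)).const_mul (lam ^ 2 / 8)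
  refine h.congr_deriv ?_; symm
  simp only [sech]
  field_simp
  ring

-- second derivative of v-shape
private lemma hv2 (lam : ℝ) (y : ℝ) :
    HasDerivAt (fun y : ℝ => lam ^ 2 * a * Real.sinh (a * y + b) / Real.cosh (a * y + b) ^ 3)
      (lam ^ 2 * a ^ 2 * (3 / Real.cosh (a * y + b) ^ 4 - 2 / Real.cosh (a * y + b) ^ 2)) y := by
  have hnum : HasDerivAt (fun y : ℝ => lam ^ 2 * a * Real.sinh (a * y + b))
      (lam ^ 2 * a * (a * Real.cosh (a * y + b))) y := (hsinh a b y).const_mul _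
  have hden : HasDerivAt (fun y : ℝ => Real.cosh (a * y + b) ^ 3)
      (3 * Real.cosh (a * y + b) ^ 2 * (a * Real.sinh (a * y + b))) y := by
    simpa [Pi.pow_def] using (hcosh a b y).pow 3
  have h := hnum.div hden (pow_ne_zero 3 (coshne a b y))
  refine h.congr_deriv ?_; symm
  have hsq : Real.sinh (a * y + b) ^ 2 = Real.cosh (a * y + b) ^ 2 - 1 := by
    have := Real.cosh_sq_sub_sinh_sq (a * y + b); linarith
  have hc := coshne a b y
  field_simp
  linear_combination (3 * lam ^ 2 * a ^ 2) * hsq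

-- third derivative of v-shape
private lemma hv3 (lam : ℝ) (y : ℝ) :
    HasDerivAt (fun y : ℝ => lam ^ 2 * a ^ 2 * (3 / Real.cosh (a * y + b) ^ 4 - 2 / Real.cosh (a * y + b) ^ 2))
      (lam ^ 2 * a ^ 3 * Real.sinh (a * y + b) * (4 / Real.cosh (a * y + b) ^ 3 - 12 / Real.cosh (a * y + b) ^ 5)) y := by
  have h4 : HasDerivAt (fun y : ℝ => (Real.cosh (a * y + b) ^ 4)⁻¹)
      (-(4 * Real.cosh (a * y + b) ^ 3 * (a * Real.sinh (a * y + b))) / (Real.cosh (a * y + b) ^ 4) ^ 2) y := by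
    have hden : HasDerivAt (fun y : ℝ => Real.cosh (a * y + b) ^ 4)
        (4 * Real.cosh (a * y + b) ^ 3 * (a * Real.sinh (a * y + b))) y := by
      simpa [Pi.pow_def] using (hcosh a b y).pow 4
    exact hden.inv (pow_ne_zero 4 (coshne a b y))
  have h2 : HasDerivAt (fun y : ℝ => (Real.cosh (a * y + b) ^ 2)⁻¹)
      (-(2 * Real.cosh (a * y + b) * (a * Real.sinh (a * y + b))) / (Real.cosh (a * y + b) ^ 2) ^ 2) y := by
    have hden : HasDerivAt (fun y : ℝ => Real.cosh (a * y + b) ^ 2)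
        (2 * Real.cosh (a * y + b) * (a * Real.sinh (a * y + b))) y := by
      simpa [Pi.pow_def] using (hcosh a b y).pow 2
    exact hden.inv (pow_ne_zero 2 (coshne a b y))
  have h := (((h4.const_mul 3).sub (h2.const_mul 2))).const_mul (lam ^ 2 * a ^ 2)
  have heq : (fun y : ℝ => lam ^ 2 * a ^ 2 * (3 / Real.cosh (a * y + b) ^ 4 - 2 / Real.cosh (a * y + b) ^ 2))
      = fun y : ℝ => lam ^ 2 * a ^ 2 * (3 * (Real.cosh (a * y + b) ^ 4)⁻¹ - 2 * (Real.cosh (a * y + b) ^ 2)⁻¹) := by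
    funext y; field_simp
  rw [heq]
  refine h.congr_deriv ?_; symm
  have hc := coshne a b y
  field_simp
  ring

end helpers

private lemma itd3 (f : ℝ → ℝ) : iteratedDeriv 3 f = deriv (deriv (deriv f)) := by
  rw [show (3 : ℕ) = 2 + 1 from rfl, iteratedDeriv_succ, show (2 : ℕ) = 1 + 1 from rfl,
    iteratedDeriv_succ, iteratedDeriv_one]

private lemma itd2 (f : ℝ → ℝ) : iteratedDeriv 2 f = deriv (deriv f) := by
  rw [show (2 : ℕ) = 1 + 1 from rfl, iteratedDeriv_succ, iteratedDeriv_one]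

set_option maxHeartbeats 2000000 in
/-- The travelling-wave pair `(v, w)` is an exact solution of the classical
coupled Jaulent–Miodek system. -/
theorem jaulent_miodek_exact_solution (lam : ℝ)
    (v w : ℝ → ℝ → ℝ)
    (hv : v = fun x t => (lam ^ 2 / 8) * (1 - 4 * sech (lam * (x + lam ^ 2 * t / 2) / 2) ^ 2))
    (hw : w = fun x t => lam * sech (lam * (x + lam ^ 2 * t / 2) / 2)) :
    ∀ x t : ℝ,
      (deriv (fun s => v x s) t
        + iteratedDeriv 3 (fun y => v y t) x
        + (3 / 2) * w x t * iteratedDeriv 3 (fun y => w y t) x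
        + (9 / 2) * deriv (fun y => w y t) x * iteratedDeriv 2 (fun y => w y t) x
        - 6 * v x t * deriv (fun y => v y t) x
        - 6 * v x t * w x t * deriv (fun y => w y t) x
        - (3 / 2) * deriv (fun y => v y t) x * w x t ^ 2 = 0)
      ∧ (deriv (fun s => w x s) t
        + iteratedDeriv 3 (fun y => w y t) x
        - 6 * deriv (fun y => v y t) x * w x t
        - 6 * v x t * deriv (fun y => w y t) x
        - (15 / 2) * deriv (fun y => w y t) x * w x t ^ 2 = 0) := by
  subst hv hw
  intro x t
  set A : ℝ := lam / 2 with hA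
  set B : ℝ := lam ^ 3 * t / 4 with hB
  set A' : ℝ := lam ^ 3 / 4 with hA'
  set B' : ℝ := lam * x / 2 with hB'
  have harg : ∀ y : ℝ, lam * (y + lam ^ 2 * t / 2) / 2 = A * y + B := by
    intro y; rw [hA, hB]; ring
  have harg' : ∀ s : ℝ, lam * (x + lam ^ 2 * s / 2) / 2 = A' * s + B' := by
    intro s; rw [hA', hB']; ring
  have hpt : A * x + B = A' * t + B' := by rw [hA, hB, hA', hB']; ring
  set U : ℝ := A * x + B with hU
  set C : ℝ := Real.cosh U with hC
  set S : ℝ := Real.sinh U with hS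
  have hCne : C ≠ 0 := ne_of_gt (Real.cosh_pos _)
  have hsq : S ^ 2 = C ^ 2 - 1 := by
    have := Real.cosh_sq_sub_sinh_sq U; rw [hC, hS]; linarith
  -- rewrite functions into the a*y+b shape
  have hvfun : (fun y => lam ^ 2 / 8 * (1 - 4 * sech (lam * (y + lam ^ 2 * t / 2) / 2) ^ 2))
      = fun y => lam ^ 2 / 8 * (1 - 4 * sech (A * y + B) ^ 2) := by
    funext y; rw [harg y]
  have hwfun : (fun y => lam * sech (lam * (y + lam ^ 2 * t / 2) / 2))
      = fun y => lam * sech (A * y + B) := by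
    funext y; rw [harg y]
  have hvtfun : (fun s => lam ^ 2 / 8 * (1 - 4 * sech (lam * (x + lam ^ 2 * s / 2) / 2) ^ 2))
      = fun s => lam ^ 2 / 8 * (1 - 4 * sech (A' * s + B') ^ 2) := by
    funext s; rw [harg' s]
  have hwtfun : (fun s => lam * sech (lam * (x + lam ^ 2 * s / 2) / 2))
      = fun s => lam * sech (A' * s + B') := by
    funext s; rw [harg' s]
  -- spatial derivatives of v
  have dv1 : deriv (fun y => lam ^ 2 / 8 * (1 - 4 * sech (A * y + B) ^ 2))
      = fun y => lam ^ 2 * A * Real.sinh (A * y + B) / Real.cosh (A * y + B) ^ 3 :=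
    funext fun y => (hv1 A B lam y).deriv
  have dv2 : deriv (fun y => lam ^ 2 * A * Real.sinh (A * y + B) / Real.cosh (A * y + B) ^ 3)
      = fun y => lam ^ 2 * A ^ 2 * (3 / Real.cosh (A * y + B) ^ 4 - 2 / Real.cosh (A * y + B) ^ 2) :=
    funext fun y => (hv2 A B lam y).deriv
  have dv3 : deriv (fun y => lam ^ 2 * A ^ 2 * (3 / Real.cosh (A * y + B) ^ 4 - 2 / Real.cosh (A * y + B) ^ 2)) x
      = lam ^ 2 * A ^ 3 * S * (4 / C ^ 3 - 12 / C ^ 5) := (hv3 A B lam x).deriv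
  -- spatial derivatives of w
  have dw1 : deriv (fun y => lam * sech (A * y + B))
      = fun y => lam * (-(A * Real.sinh (A * y + B)) / Real.cosh (A * y + B) ^ 2) :=
    funext fun y => ((hs1 A B y).const_mul lam).deriv
  have dw2 : deriv (fun y => lam * (-(A * Real.sinh (A * y + B)) / Real.cosh (A * y + B) ^ 2))
      = fun y => lam * (A ^ 2 * (1 / Real.cosh (A * y + B) - 2 / Real.cosh (A * y + B) ^ 3)) :=
    funext fun y => ((hs2 A B y).const_mul lam).deriv
  have dw3 : deriv (fun y => lam * (A ^ 2 * (1 / Real.cosh (A * y + B) - 2 / Real.cosh (A * y + B) ^ 3))) x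
      = lam * (A ^ 3 * S * (6 / C ^ 4 - 1 / C ^ 2)) := ((hs3 A B x).const_mul lam).deriv
  -- time derivatives
  have dvt : deriv (fun s => lam ^ 2 / 8 * (1 - 4 * sech (A' * s + B') ^ 2)) t
      = lam ^ 2 * A' * S / C ^ 3 := by
    have := (hv1 A' B' lam t).deriv
    rw [this, ← hpt, ← hC, ← hS]
  have dwt : deriv (fun s => lam * sech (A' * s + B')) t
      = lam * (-(A' * S) / C ^ 2) := by
    have := ((hs1 A' B' t).const_mul lam).deriv
    rw [this, ← hpt, ← hC, ← hS]
  simp only [hvfun, hwfun, hvtfun, hwtfun]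
  rw [itd3, itd3, itd2]
  rw [dv1, dv2, dv3, dw1, dw2, dw3, dvt, dwt]
  -- values at x
  have hvx : deriv (fun y => lam ^ 2 * A * Real.sinh (A * y + B) / Real.cosh (A * y + B) ^ 3) x
      = lam ^ 2 * A ^ 2 * (3 / C ^ 4 - 2 / C ^ 2) := by rw [dv2]
  have hwx2 : deriv (fun y => lam * (-(A * Real.sinh (A * y + B)) / Real.cosh (A * y + B) ^ 2)) x
      = lam * (A ^ 2 * (1 / C - 2 / C ^ 3)) := by rw [dw2]
  rw [harg x]
  simp only [← hU, ← hC, ← hS, sech]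
  rw [hA, hA']
  constructor <;> (field_simp; ring)
end

section
/- Generalized Taylor formula (one term): if 0 < α ≤ 1 and f, D^α f are continuous on [a,b] with D^α f bounded, then for every t in (a,b] there exists ξ ∈ [a,t] such that f(t) = f(a) + ((t-a)^α / Γ(α+1)) · (D^α f)(ξ), where D^α is the Caputo derivative based at a. -/
open MeasureTheory intervalIntegral Set

lemma measurable_rpow_const {c : ℝ} : Measurable fun x : ℝ => x ^ c := by
  have hfun : (fun x : ℝ => x ^ c) = fun x =>
      if x = 0 then (if c = 0 then 1 else 0)
      else Real.exp (Real.log x * c) * (if x < 0 then Real.cos (c * Real.pi) else 1) := by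
    funext x
    rcases lt_trichotomy x 0 with h | h | h
    · rw [if_neg h.ne, if_pos h, Real.rpow_def_of_neg h]
    · subst h
      rcases eq_or_ne c 0 with hc | hc
      · simp [hc]
      · simp [Real.zero_rpow hc, hc]
    · rw [if_neg h.ne', if_neg (not_lt.mpr h.le), Real.rpow_def_of_pos h, mul_one]
  rw [hfun]
  refine Measurable.ite (MeasurableSet.singleton 0) measurable_const ?_
  exact ((Real.measurable_log.mul measurable_const).exp).mul
    (Measurable.ite measurableSet_Iio measurable_const measurable_const)


lemma realBeta (p q : ℝ) (hp : 0 < p) (hq : 0 < q) :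
    ∫ u in (0:ℝ)..1, u ^ (p-1) * (1-u) ^ (q-1)
      = Real.Gamma p * Real.Gamma q / Real.Gamma (p+q) := by
  have h := Complex.Gamma_mul_Gamma_eq_betaIntegral (s := p) (t := q)
    (by simpa using hp) (by simpa using hq)
  have hbeta : Complex.betaIntegral p q
      = ((∫ u in (0:ℝ)..1, u ^ (p-1) * (1-u) ^ (q-1) : ℝ) : ℂ) := by
    rw [Complex.betaIntegral, ← intervalIntegral.integral_ofReal]
    refine intervalIntegral.integral_congr fun x hx => ?_
    rw [uIcc_of_le (by norm_num : (0:ℝ) ≤ 1)] at hx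
    rw [Complex.ofReal_mul, Complex.ofReal_cpow hx.1, Complex.ofReal_cpow (by linarith [hx.2] : (0:ℝ) ≤ 1 - x)]
    push_cast
    ring
  have hΓ : Complex.Gamma ((p:ℂ) + q) = (Real.Gamma (p+q) : ℂ) := by
    rw [← Complex.ofReal_add, Complex.Gamma_ofReal]
  have hne : Real.Gamma (p+q) ≠ 0 := (Real.Gamma_pos_of_pos (by linarith)).ne'
  rw [hbeta, hΓ, Complex.Gamma_ofReal, Complex.Gamma_ofReal] at h
  have h2 := congrArg Complex.re h
  simp [← Complex.ofReal_mul] at h2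
  field_simp
  linarith [h2]



lemma innerBeta {α τ t : ℝ} (hα0 : 0 < α) (hα1 : α < 1) (hτt : τ < t) :
    ∫ s in τ..t, (t-s) ^ (α-1) * (s-τ) ^ (-α)
      = Real.Gamma (1-α) * Real.Gamma α := by
  set d := t - τ with hd
  have hd0 : 0 < d := by simp [hd]; linarith
  have h1 : ∫ s in τ..t, (t-s) ^ (α-1) * (s-τ) ^ (-α)
      = ∫ x in (0:ℝ)..d, (d-x) ^ (α-1) * x ^ (-α) := by
    have e := intervalIntegral.integral_comp_add_left (a := (0:ℝ)) (b := d)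
      (fun s => (t-s) ^ (α-1) * (s-τ) ^ (-α)) τ
    simp only [add_zero] at e
    rw [show τ + d = t by rw [hd]; ring] at e
    rw [← e]
    refine intervalIntegral.integral_congr fun x hx => ?_
    rw [show t - (τ + x) = d - x by rw [hd]; ring, show τ + x - τ = x by ring]
  have h2 : ∫ x in (0:ℝ)..d, (d-x) ^ (α-1) * x ^ (-α)
      = d • ∫ u in (0:ℝ)..1, (fun x => (d-x) ^ (α-1) * x ^ (-α)) (d * u) := by
    rw [intervalIntegral.integral_comp_mul_left (fun x => (d-x) ^ (α-1) * x ^ (-α)) hd0.ne']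
    rw [mul_zero, mul_one, smul_smul, mul_inv_cancel₀ hd0.ne', one_smul]
  have h3 : ∀ u ∈ uIcc (0:ℝ) 1,
      (d - d*u) ^ (α-1) * (d*u) ^ (-α) = d⁻¹ * (u ^ ((1-α)-1) * (1-u) ^ (α-1)) := by
    intro u hu
    rw [uIcc_of_le (by norm_num : (0:ℝ) ≤ 1)] at hu
    have h1u : 0 ≤ 1 - u := by linarith [hu.2]
    rw [show d - d*u = d * (1-u) by ring, Real.mul_rpow hd0.le h1u,
      Real.mul_rpow hd0.le hu.1]
    rw [show (1:ℝ)-α-1 = -α by ring]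
    rw [show (d:ℝ) ^ (α-1) * (1-u) ^ (α-1) * (d ^ (-α) * u ^ (-α))
        = (d ^ (α-1) * d ^ (-α)) * (u ^ (-α) * (1-u) ^ (α-1)) by ring,
      ← Real.rpow_add hd0, show α - 1 + -α = -1 by ring, Real.rpow_neg_one]
  rw [h1, h2, intervalIntegral.integral_congr h3, intervalIntegral.integral_const_mul,
    realBeta (1-α) α (by linarith) hα0]
  norm_num [Real.Gamma_one]
  field_simp



noncomputable def Ker (a t α : ℝ) (D : ℝ → ℝ) : ℝ × ℝ → ℝ :=
  fun p => if p.2 < p.1 then (t - p.1) ^ (α-1) * (D p.2 * (p.1 - p.2) ^ (-α)) else 0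

section
variable {a t α C : ℝ} {D : ℝ → ℝ}

lemma ker_meas (hD : Measurable D) : Measurable (Ker a t α D) := by
  unfold Ker
  refine Measurable.ite (measurableSet_lt measurable_snd measurable_fst) ?_ measurable_const
  exact (measurable_rpow_const.comp (measurable_const.sub measurable_fst)).mul
    ((hD.comp measurable_snd).mul
      (measurable_rpow_const.comp (measurable_fst.sub measurable_snd)))

lemma int_rpow_left (hα1 : α < 1) {s : ℝ} :
    IntegrableOn (fun τ => (s - τ) ^ (-α)) (Ioo a s) volume := by
  have h : IntervalIntegrable (fun τ => (s - τ) ^ (-α)) volume a s := by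
    have := (intervalIntegrable_rpow' (a := s - a) (b := s - s)
      (by linarith : (-1:ℝ) < -α)).comp_sub_left s
    simpa using this
  rcases le_or_gt a s with h' | h'
  · exact ((intervalIntegrable_iff_integrableOn_Ioc_of_le h').mp h).mono_set Ioo_subset_Ioc_self
  · simp [Ioo_eq_empty_of_le h'.le]

lemma int_rpow_right (hα0 : 0 < α) {τ : ℝ} :
    IntegrableOn (fun s => (t - s) ^ (α-1)) (Ioc τ t) volume := by
  have h : IntervalIntegrable (fun s => (t - s) ^ (α-1)) volume τ t := by
    have := (intervalIntegrable_rpow' (a := t - τ) (b := t - t)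
      (by linarith : (-1:ℝ) < α - 1)).comp_sub_left t
    simpa using this
  rcases le_or_gt τ t with h' | h'
  · exact (intervalIntegrable_iff_integrableOn_Ioc_of_le h').mp h
  · simp [Ioc_eq_empty_of_le h'.le]

-- section in τ as an indicator function
lemma ker_sec_eq {s : ℝ} :
    (fun τ => Ker a t α D (s, τ))
      = Set.indicator (Iio s) (fun τ => (t-s) ^ (α-1) * (D τ * (s - τ) ^ (-α))) := by
  funext τ
  by_cases h : τ < s <;> simp [Ker, Set.indicator, h, mem_Iio]

lemma sec_int' (hα1 : α < 1) (hD : Measurable D)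
    (hC : ∀ x ∈ Set.Ioo a t, |D x| ≤ C) {s : ℝ} (hs : s ∈ Set.Ioc a t) :
    IntegrableOn (fun τ => (t-s) ^ (α-1) * (D τ * (s - τ) ^ (-α))) (Set.Ioo a s) volume := by
  refine Integrable.const_mul ?_ _
  refine Integrable.bdd_mul (c := C) (int_rpow_left hα1) ?_ ?_
  · exact (hD.aestronglyMeasurable).restrict
  · filter_upwards [ae_restrict_mem measurableSet_Ioo] with x hx
    rw [Real.norm_eq_abs]
    exact hC x ⟨hx.1, lt_of_lt_of_le hx.2 hs.2⟩

lemma sec_int (hα1 : α < 1) (hD : Measurable D)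
    (hC : ∀ x ∈ Set.Ioo a t, |D x| ≤ C) {s : ℝ} (hs : s ∈ Set.Ioc a t) :
    Integrable (fun τ => Ker a t α D (s, τ)) (volume.restrict (Set.Ioc a t)) := by
  rw [ker_sec_eq, integrable_indicator_iff measurableSet_Iio]
  have hset : Set.Iio s ∩ Set.Ioc a t = Set.Ioo a s := by
    ext x
    simp only [mem_inter_iff, mem_Iio, mem_Ioc, mem_Ioo]
    constructor
    · rintro ⟨h1, h2, h3⟩; exact ⟨h2, h1⟩
    · rintro ⟨h1, h2⟩; exact ⟨h2, h1, le_trans h2.le hs.2⟩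
  rw [IntegrableOn, Measure.restrict_restrict measurableSet_Iio, hset]
  exact sec_int' hα1 hD hC hs

lemma ker_integrable (hα0 : 0 < α) (hα1 : α < 1) (hat : a < t) (hC0 : 0 ≤ C)
    (hD : Measurable D) (hC : ∀ x ∈ Set.Ioo a t, |D x| ≤ C) :
    Integrable (Ker a t α D)
      ((volume.restrict (Set.Ioc a t)).prod (volume.restrict (Set.Ioc a t))) := by
  have hmeas := (ker_meas (a := a) (t := t) (α := α) hD).aestronglyMeasurable
    (μ := (volume.restrict (Set.Ioc a t)).prod (volume.restrict (Set.Ioc a t)))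
  rw [MeasureTheory.integrable_prod_iff hmeas]
  constructor
  · filter_upwards [ae_restrict_mem measurableSet_Ioc] with s hs
    exact sec_int hα1 hD hC hs
  · set K := C * ((t - a) ^ (1-α) / (1-α)) with hK
    refine Integrable.mono' (g := fun s => K * (t - s) ^ (α-1))
      ((int_rpow_right hα0 (τ := a)).const_mul K)
      (((ker_meas hD).norm.aestronglyMeasurable).integral_prod_right') ?_
    filter_upwards [ae_restrict_mem measurableSet_Ioc] with s hs
    have hnn : 0 ≤ ∫ τ, ‖Ker a t α D (s, τ)‖ ∂(volume.restrict (Set.Ioc a t)) :=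
      integral_nonneg fun τ => norm_nonneg _
    rw [Real.norm_eq_abs, abs_of_nonneg hnn]
    -- rewrite as integral over Ioo a s
    have hsec : (fun τ => ‖Ker a t α D (s, τ)‖)
        = Set.indicator (Iio s) (fun τ => ‖(t-s) ^ (α-1) * (D τ * (s - τ) ^ (-α))‖) := by
      funext τ
      by_cases h : τ < s <;> simp [Ker, Set.indicator, h, mem_Iio]
    have hset : Set.Iio s ∩ Set.Ioc a t = Set.Ioo a s := by
      ext x
      simp only [mem_inter_iff, mem_Iio, mem_Ioc, mem_Ioo]
      constructor
      · rintro ⟨h1, h2, h3⟩; exact ⟨h2, h1⟩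
      · rintro ⟨h1, h2⟩; exact ⟨h2, h1, le_trans h2.le hs.2⟩
    rw [hsec, MeasureTheory.integral_indicator measurableSet_Iio,
      Measure.restrict_restrict measurableSet_Iio, hset]
    have hstep : ∫ τ in Set.Ioo a s, ‖(t-s) ^ (α-1) * (D τ * (s - τ) ^ (-α))‖
        ≤ ∫ τ in Set.Ioo a s, (t-s) ^ (α-1) * (C * (s - τ) ^ (-α)) := by
      refine setIntegral_mono_on ?_ ?_ measurableSet_Ioo ?_
      · exact (sec_int' hα1 hD hC hs).norm
      · exact ((int_rpow_left hα1).const_mul C).const_mul _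
      · intro τ hτ
        rw [norm_mul, norm_mul, Real.norm_eq_abs, Real.norm_eq_abs, Real.norm_eq_abs,
          abs_of_nonneg (Real.rpow_nonneg (by linarith [hs.2] : (0:ℝ) ≤ t - s) _),
          abs_of_nonneg (Real.rpow_nonneg (by linarith [hτ.2] : (0:ℝ) ≤ s - τ) _)]
        have := hC τ ⟨hτ.1, lt_of_lt_of_le hτ.2 hs.2⟩
        have h1 : 0 ≤ (t-s) ^ (α-1) := Real.rpow_nonneg (by linarith [hs.2]) _
        have h2 : 0 ≤ (s-τ) ^ (-α) := Real.rpow_nonneg (by linarith [hτ.2]) _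
        exact mul_le_mul_of_nonneg_left (mul_le_mul_of_nonneg_right this h2) h1
    refine le_trans hstep ?_
    rw [MeasureTheory.integral_const_mul]
    have hval : ∫ τ in Set.Ioo a s, C * (s - τ) ^ (-α) = C * ((s-a) ^ (1-α) / (1-α)) := by
      rw [MeasureTheory.integral_const_mul]
      congr 1
      rw [← integral_Ioc_eq_integral_Ioo, ← intervalIntegral.integral_of_le hs.1.le]
      have e := intervalIntegral.integral_comp_sub_left (a := a) (b := s)
        (fun x => x ^ (-α)) s
      rw [e, sub_self, integral_rpow (Or.inl (by linarith : (-1:ℝ) < -α))]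
      rw [Real.zero_rpow (by linarith : -α + 1 ≠ 0)]
      rw [show -α + 1 = 1 - α by ring]
      ring
    rw [hval]
    have hmono : (s-a) ^ (1-α) ≤ (t-a) ^ (1-α) :=
      Real.rpow_le_rpow (by linarith [hs.1]) (by linarith [hs.2]) (by linarith)
    have h1 : 0 ≤ (t-s) ^ (α-1) := Real.rpow_nonneg (by linarith [hs.2]) _
    have h2 : 0 < 1 - α := by linarith
    have hfin : C * ((s-a) ^ (1-α) / (1-α)) ≤ K := by
      rw [hK]; gcongr
    calc (t-s) ^ (α-1) * (C * ((s-a) ^ (1-α) / (1-α)))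
        ≤ (t-s) ^ (α-1) * K := mul_le_mul_of_nonneg_left hfin h1
      _ = K * (t-s) ^ (α-1) := mul_comm _ _
end

section
variable {a t α C : ℝ} {D : ℝ → ℝ}

lemma swap_core (hα0 : 0 < α) (hα1 : α < 1) (hat : a < t) (hC0 : 0 ≤ C)
    (hD : Measurable D) (hC : ∀ x ∈ Set.Ioo a t, |D x| ≤ C) :
    ∫ s in Set.Ioc a t, ((t-s) ^ (α-1) * ∫ τ in Set.Ioc a s, D τ * (s-τ) ^ (-α))
      = (Real.Gamma (1-α) * Real.Gamma α) * ∫ τ in Set.Ioc a t, D τ := by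
  have hstep1 : ∫ s in Set.Ioc a t, ((t-s) ^ (α-1) * ∫ τ in Set.Ioc a s, D τ * (s-τ) ^ (-α))
      = ∫ s in Set.Ioc a t, ∫ τ in Set.Ioc a t, Ker a t α D (s, τ) := by
    refine setIntegral_congr_fun measurableSet_Ioc fun s hs => ?_
    have hset : Set.Iio s ∩ Set.Ioc a t = Set.Ioo a s := by
      ext x
      simp only [mem_inter_iff, mem_Iio, mem_Ioc, mem_Ioo]
      exact ⟨fun ⟨h1, h2, h3⟩ => ⟨h2, h1⟩, fun ⟨h1, h2⟩ => ⟨h2, h1, le_trans h2.le hs.2⟩⟩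
    rw [ker_sec_eq, MeasureTheory.integral_indicator measurableSet_Iio,
      Measure.restrict_restrict measurableSet_Iio, hset,
      MeasureTheory.integral_const_mul, integral_Ioc_eq_integral_Ioo]
  have hswap : ∫ s in Set.Ioc a t, ∫ τ in Set.Ioc a t, Ker a t α D (s, τ)
      = ∫ τ in Set.Ioc a t, ∫ s in Set.Ioc a t, Ker a t α D (s, τ) := by
    exact MeasureTheory.integral_integral_swap
      (f := fun s τ => Ker a t α D (s, τ))
      (ker_integrable hα0 hα1 hat hC0 hD hC)
  have hstep3 : ∫ τ in Set.Ioc a t, ∫ s in Set.Ioc a t, Ker a t α D (s, τ)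
      = ∫ τ in Set.Ioc a t, (Real.Gamma (1-α) * Real.Gamma α) * D τ := by
    rw [integral_Ioc_eq_integral_Ioo,
      integral_Ioc_eq_integral_Ioo (f := fun τ => (Real.Gamma (1-α) * Real.Gamma α) * D τ)]
    refine setIntegral_congr_fun measurableSet_Ioo fun τ hτ => ?_
    have hsec : (fun s => Ker a t α D (s, τ))
        = Set.indicator (Set.Ioi τ) (fun s => D τ * ((t-s) ^ (α-1) * (s - τ) ^ (-α))) := by
      funext s
      by_cases h : τ < s <;> simp [Ker, Set.indicator, h, mem_Ioi] <;> ring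
    have hset : Set.Ioi τ ∩ Set.Ioc a t = Set.Ioc τ t := by
      ext x
      simp only [mem_inter_iff, mem_Ioi, mem_Ioc]
      exact ⟨fun ⟨h1, h2, h3⟩ => ⟨h1, h3⟩, fun ⟨h1, h2⟩ => ⟨h1, lt_trans hτ.1 h1, h2⟩⟩
    rw [hsec, MeasureTheory.integral_indicator measurableSet_Ioi,
      Measure.restrict_restrict measurableSet_Ioi, hset,
      MeasureTheory.integral_const_mul,
      ← intervalIntegral.integral_of_le hτ.2.le, innerBeta hα0 hα1 hτ.2]
    ring
  rw [hstep1, hswap, hstep3, MeasureTheory.integral_const_mul]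
end



noncomputable def caputoAt (a α : ℝ) (f : ℝ → ℝ) (t : ℝ) : ℝ :=
  if α = 1 then deriv f t
  else (1 / Real.Gamma (1 - α)) * ∫ τ in a..t, (t - τ) ^ (-α) * deriv f τ

/-- Generalized Taylor formula with one term: if `0 < α ≤ 1`, `f` is continuously
differentiable on `[a,b]`, and `D_a^α f` is continuous and bounded on `[a,b]`,
then for every `t ∈ (a, b]` there is `ξ ∈ [a, t]` with
`f t = f a + (t - a)^α / Γ(α+1) * (D_a^α f) ξ`. -/
theorem generalized_taylor_one_term (a b α : ℝ) (hab : a < b)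
    (hα0 : 0 < α) (hα1 : α ≤ 1) (f : ℝ → ℝ)
    (hf : ContDiffOn ℝ 1 f (Set.Icc a b))
    (hcont : ContinuousOn (caputoAt a α f) (Set.Icc a b))
    (hbdd : ∃ M : ℝ, ∀ t ∈ Set.Icc a b, |caputoAt a α f t| ≤ M) :
    ∀ t ∈ Set.Ioc a b, ∃ ξ ∈ Set.Icc a t,
      f t = f a + ((t - a) ^ α / Real.Gamma (α + 1)) * caputoAt a α f ξ := by
  intro t ht
  have hat : a < t := ht.1
  have htb : t ≤ b := ht.2
  rcases eq_or_lt_of_le hα1 with h1 | hlt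
  · -- case α = 1 : mean value theorem
    subst h1
    obtain ⟨c, hc, hc'⟩ := exists_deriv_eq_slope f hat
      (hf.continuousOn.mono (Icc_subset_Icc le_rfl htb))
      ((hf.differentiableOn one_ne_zero).mono
        (fun x hx => ⟨hx.1.le, le_trans hx.2.le htb⟩))
    refine ⟨c, ⟨hc.1.le, hc.2.le⟩, ?_⟩
    have : caputoAt a 1 f c = deriv f c := by simp [caputoAt]
    rw [this, hc', Real.rpow_one, show (1:ℝ) + 1 = 2 by norm_num, Real.Gamma_two]
    have h0 : t - a ≠ 0 := sub_ne_zero.mpr hat.ne'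
    field_simp
    ring
  · -- case α < 1
    have hαne : α ≠ 1 := ne_of_lt hlt
    set g := caputoAt a α f with hgdef
    set D := deriv f with hDdef
    have hD : Measurable D := measurable_deriv f
    -- bound on D in the interior
    have hdw : ContinuousOn (derivWithin f (Set.Icc a b)) (Set.Icc a b) :=
      hf.continuousOn_derivWithin (uniqueDiffOn_Icc hab) le_rfl
    obtain ⟨C, hCb⟩ := (isCompact_Icc (a := a) (b := b)).exists_bound_of_continuousOn hdw
    have hC : ∀ x ∈ Set.Ioo a b, |D x| ≤ C := by
      intro x hx
      have hmem : Set.Icc a b ∈ nhds x := Icc_mem_nhds hx.1 hx.2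
      have : derivWithin f (Set.Icc a b) x = D x := derivWithin_of_mem_nhds hmem
      rw [← this]
      simpa [Real.norm_eq_abs] using hCb x ⟨hx.1.le, hx.2.le⟩
    have hC' : ∀ x ∈ Set.Ioo a t, |D x| ≤ C := fun x hx =>
      hC x ⟨hx.1, lt_of_lt_of_le hx.2 htb⟩
    have hC0 : 0 ≤ C := le_trans (abs_nonneg _) (hC' ((a+t)/2) ⟨by linarith, by linarith⟩)
    -- derivative facts & FTC
    have hderiv : ∀ x ∈ Set.Ioo a t, HasDerivAt f (D x) x := by
      intro x hx
      have hx' : x ∈ Set.Ioo a b := ⟨hx.1, lt_of_lt_of_le hx.2 htb⟩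
      have := (hf.differentiableOn one_ne_zero x ⟨hx'.1.le, hx'.2.le⟩).differentiableAt
        (Icc_mem_nhds hx'.1 hx'.2)
      exact this.hasDerivAt
    have hDint : IntervalIntegrable D volume a t := by
      rw [intervalIntegrable_iff_integrableOn_Ioc_of_le hat.le, IntegrableOn,
        Measure.restrict_congr_set (Ioo_ae_eq_Ioc (a := a) (b := t)).symm]
      refine Integrable.mono' (integrable_const C) hD.aestronglyMeasurable.restrict ?_
      filter_upwards [ae_restrict_mem measurableSet_Ioo] with x hx
      simpa [Real.norm_eq_abs] using hC' x hx
    have hFTC : ∫ τ in Set.Ioc a t, D τ = f t - f a := by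
      rw [← intervalIntegral.integral_of_le hat.le]
      exact intervalIntegral.integral_eq_sub_of_hasDeriv_right_of_le hat.le
        (hf.continuousOn.mono (Icc_subset_Icc le_rfl htb))
        (fun x hx => (hderiv x hx).hasDerivWithinAt) hDint
    -- continuity of g
    have hg : ContinuousOn g (Set.Icc a t) := hcont.mono (Icc_subset_Icc le_rfl htb)
    -- the weighted integral I
    set I := ∫ s in a..t, (t-s) ^ (α-1) * g s with hIdef
    have hcap : ∀ s ∈ Set.Ioc a t, g s
        = (1 / Real.Gamma (1-α)) * ∫ τ in Set.Ioc a s, D τ * (s - τ) ^ (-α) := by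
      intro s hs
      rw [hgdef]
      unfold caputoAt
      rw [if_neg hαne, intervalIntegral.integral_of_le hs.1.le]
      congr 1
      refine setIntegral_congr_fun measurableSet_Ioc fun τ _ => ?_
      ring
    have hI : I = Real.Gamma α * (f t - f a) := by
      rw [hIdef, intervalIntegral.integral_of_le hat.le]
      have : ∫ s in Set.Ioc a t, (t-s) ^ (α-1) * g s
          = ∫ s in Set.Ioc a t, (1 / Real.Gamma (1-α)) *
              ((t-s) ^ (α-1) * ∫ τ in Set.Ioc a s, D τ * (s - τ) ^ (-α)) := by
        refine setIntegral_congr_fun measurableSet_Ioc fun s hs => ?_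
        rw [hcap s hs]; ring
      rw [this, MeasureTheory.integral_const_mul, swap_core hα0 hlt hat hC0 hD hC', hFTC]
      have hΓne : Real.Gamma (1-α) ≠ 0 := (Real.Gamma_pos_of_pos (by linarith)).ne'
      field_simp
    -- the weight integral W
    set W := ∫ s in a..t, (t-s) ^ (α-1) with hWdef
    have hW : W = (t-a) ^ α / α := by
      rw [hWdef]
      have e := intervalIntegral.integral_comp_sub_left (a := a) (b := t)
        (fun x => x ^ (α-1)) t
      rw [e, sub_self, integral_rpow (Or.inl (by linarith : (-1:ℝ) < α - 1)),
        Real.zero_rpow (by linarith : α - 1 + 1 ≠ 0), show α - 1 + 1 = α by ring]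
      ring
    have hW0 : 0 < W := by
      rw [hW]
      exact div_pos (Real.rpow_pos_of_pos (by linarith) _) hα0
    -- integrability
    have h_w_int : IntervalIntegrable (fun s => (t-s) ^ (α-1)) volume a t :=
      (intervalIntegrable_iff_integrableOn_Ioc_of_le hat.le).mpr (int_rpow_right hα0)
    have h_I_int : IntervalIntegrable (fun s => (t-s) ^ (α-1) * g s) volume a t :=
      h_w_int.mul_continuousOn (by rwa [uIcc_of_le hat.le])
    -- min and max of g
    obtain ⟨ξ1, hξ1mem, hξ1⟩ := (isCompact_Icc (a := a) (b := t)).exists_isMinOn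
      ⟨a, le_refl a, hat.le⟩ hg
    obtain ⟨ξ2, hξ2mem, hξ2⟩ := (isCompact_Icc (a := a) (b := t)).exists_isMaxOn
      ⟨a, le_refl a, hat.le⟩ hg
    have hlow : g ξ1 * W ≤ I := by
      rw [hWdef, hIdef, ← intervalIntegral.integral_const_mul]
      refine intervalIntegral.integral_mono_on hat.le (h_w_int.const_mul _) h_I_int ?_
      intro x hx
      have h1 : 0 ≤ (t-x) ^ (α-1) := Real.rpow_nonneg (by linarith [hx.2]) _
      have := hξ1 hx
      calc g ξ1 * (t-x) ^ (α-1) = (t-x) ^ (α-1) * g ξ1 := mul_comm _ _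
        _ ≤ (t-x) ^ (α-1) * g x := mul_le_mul_of_nonneg_left this h1
    have hhigh : I ≤ g ξ2 * W := by
      rw [hWdef, hIdef, ← intervalIntegral.integral_const_mul]
      refine intervalIntegral.integral_mono_on hat.le h_I_int (h_w_int.const_mul _) ?_
      intro x hx
      have h1 : 0 ≤ (t-x) ^ (α-1) := Real.rpow_nonneg (by linarith [hx.2]) _
      have := hξ2 hx
      calc (t-x) ^ (α-1) * g x ≤ (t-x) ^ (α-1) * g ξ2 := mul_le_mul_of_nonneg_left this h1
        _ = g ξ2 * (t-x) ^ (α-1) := mul_comm _ _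
    -- intermediate value
    have hle : g ξ1 ≤ g ξ2 := le_trans (hξ1 hξ2mem) (le_refl _)
    have hr1 : g ξ1 ≤ I / W := (le_div_iff₀ hW0).mpr hlow
    have hr2 : I / W ≤ g ξ2 := (div_le_iff₀ hW0).mpr hhigh
    have hsub : Set.uIcc ξ1 ξ2 ⊆ Set.Icc a t := by
      intro x hx
      rw [Set.uIcc, Set.mem_Icc] at hx
      exact ⟨le_trans (le_min hξ1mem.1 hξ2mem.1) hx.1,
        le_trans hx.2 (max_le hξ1mem.2 hξ2mem.2)⟩
    have hIVT := intermediate_value_uIcc (hg.mono hsub)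
    have hmem : I / W ∈ Set.uIcc (g ξ1) (g ξ2) := by
      rw [Set.uIcc_of_le hle]; exact ⟨hr1, hr2⟩
    obtain ⟨ξ, hξmem, hξval⟩ := hIVT hmem
    refine ⟨ξ, hsub hξmem, ?_⟩
    -- final algebra
    have hIeq : I = g ξ * W := by
      rw [hξval]; exact (div_mul_cancel₀ _ hW0.ne').symm
    have hΓ : Real.Gamma (α + 1) = α * Real.Gamma α := Real.Gamma_add_one hα0.ne'
    have hΓα : 0 < Real.Gamma α := Real.Gamma_pos_of_pos hα0
    rw [hI, hW] at hIeq
    rw [hΓ]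
    have hta : (0:ℝ) < (t-a) ^ α := Real.rpow_pos_of_pos (by linarith) _
    field_simp at hIeq ⊢
    nlinarith [hIeq]
end
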